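/- arXiv:1506.01068 — 3 statements merged into one kernel-verified Lean document; each statement's English description precedes it below -/
import Mathlib

section
/- Consequently, for a characteristic function χ_A of Baire class 1, the separation rank α(χ_A) equals the oscillation rank β(χ_A). -/
open Set Filter Topology

noncomputable section

/-- Oscillation of `f` at `x` restricted to `F`. -/
def osc {X : Type*} [TopologicalSpace X] (f : X → ℝ) (x : X) (F : Set X) : ENNReal :=
  ⨅ (U : Set X) (_ : IsOpen U) (_ : x ∈ U),
    ⨆ (y) (_ : y ∈ U ∩ F) (z) (_ : z ∈ U ∩ F), ENNReal.ofReal |f y - f z|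

/-- Oscillation derivative. -/
def oscDeriv {X : Type*} [TopologicalSpace X] (f : X → ℝ) (ε : ℝ) (F : Set X) : Set X :=
  {x ∈ F | ENNReal.ofReal ε ≤ osc f x F}

/-- Iterated derivatives of a set operation. -/
def iterD {X : Type*} (D : Set X → Set X) (F : Set X) (o : Ordinal.{0}) : Set X :=
  Ordinal.limitRecOn o F (fun _ ih => D ih) (fun o _ ih => ⋂ (η : Ordinal.{0}) (h : η < o), ih η h)

open Classical in
/-- Rank of a derivative: least `θ` with `D^θ(X) = ∅`, or `ω₁` if there is none. -/
def rkD {X : Type*} (D : Set X → Set X) : Ordinal.{0} :=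
  if ∃ θ, iterD D Set.univ θ = ∅ then sInf {θ | iterD D Set.univ θ = ∅}
  else (Cardinal.aleph 1).ord

/-- Oscillation rank. -/
def betaRank {X : Type*} [TopologicalSpace X] (f : X → ℝ) : Ordinal.{0} :=
  ⨆ ε : {ε : ℝ // 0 < ε}, rkD (oscDeriv f ε.1)

/-- Oscillation of a sequence of functions. -/
def oscSeq {X : Type*} [TopologicalSpace X] (f : ℕ → X → ℝ) (x : X) (F : Set X) : ENNReal :=
  ⨅ (U : Set X) (_ : IsOpen U) (_ : x ∈ U) (N : ℕ),
    ⨆ (m) (_ : N ≤ m) (n) (_ : N ≤ n) (y) (_ : y ∈ U ∩ F), ENNReal.ofReal |f m y - f n y|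

def oscSeqDeriv {X : Type*} [TopologicalSpace X] (f : ℕ → X → ℝ) (ε : ℝ) (F : Set X) : Set X :=
  {x ∈ F | ENNReal.ofReal ε ≤ oscSeq f x F}

/-- Convergence rank of a sequence. -/
def gammaRank {X : Type*} [TopologicalSpace X] (f : ℕ → X → ℝ) : Ordinal.{0} :=
  ⨆ ε : {ε : ℝ // 0 < ε}, rkD (oscSeqDeriv f ε.1)

/-- Alternating transfinite sum `Σ*_{η<θ} (−1)^η f_η`. -/
def altSum {X : Type*} (f : Ordinal.{0} → X → ℝ) (θ : Ordinal.{0}) : X → ℝ :=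
  Ordinal.limitRecOn θ (fun _ => 0)
    (fun η ih x => ih x + (if η % 2 = 0 then f η x else - f η x))
    (fun θ _ ih x => sSup {y | ∃ ζ, ∃ h : ζ < θ, ζ % 2 = 0 ∧ ih ζ h x = y})

/-- The `ξ`-th additive Borel class. -/
def Sigma0 {X : Type*} [TopologicalSpace X] (ξ : Ordinal.{0}) : Set (Set X) :=
  {s | IsOpen s} ∪
  {s | ∃ g : ℕ → Set X,
        (∀ n, ∃ η, ∃ _ : η < ξ, 1 ≤ η ∧ (g n)ᶜ ∈ Sigma0 η) ∧ s = ⋃ n, g n}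
termination_by ξ

/-- Baire class `ξ` functions. -/
def BaireClass {X : Type*} [TopologicalSpace X] (ξ : Ordinal.{0}) (f : X → ℝ) : Prop :=
  (ξ = 0 ∧ Continuous f) ∨
  (1 ≤ ξ ∧ ∃ g : ℕ → X → ℝ,
      (∀ n, ∃ η, ∃ _ : η < ξ, BaireClass η (g n)) ∧
      ∀ x, Tendsto (fun n => g n x) atTop (𝓝 (f x)))
termination_by ξ



section AuxLemmas

theorem iterD_zero {X : Type*} (D : Set X → Set X) (F : Set X) : iterD D F 0 = F :=
  Ordinal.limitRecOn_zero ..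

theorem iterD_succ {X : Type*} (D : Set X → Set X) (F : Set X) (o : Ordinal) :
    iterD D F (Order.succ o) = D (iterD D F o) :=
  Ordinal.limitRecOn_succ ..

theorem iterD_limit {X : Type*} (D : Set X → Set X) (F : Set X) {o : Ordinal} (h : Order.IsSuccLimit o) :
    iterD D F o = ⋂ (η : Ordinal) (_ : η < o), iterD D F η :=
  Ordinal.limitRecOn_limit _ _ _ _ h

/-- The main derivative associated to a set `A`. -/
def Dmain {X : Type*} [TopologicalSpace X] (A : Set X) (F : Set X) : Set X :=
  closure (F ∩ Aᶜ) ∩ closure (F ∩ A)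

theorem iter_main {X : Type*} [TopologicalSpace X] (A : Set X) (θ : Ordinal) :
    iterD (fun F => F ∩ Dmain A F) Set.univ θ = iterD (Dmain A) Set.univ θ ∧
      IsClosed (iterD (Dmain A) Set.univ θ) := by
  induction θ using Ordinal.limitRecOn with
  | zero => simp [iterD_zero]
  | add_one o ih =>
    rw [Ordinal.add_one_eq_succ, iterD_succ, iterD_succ, ih.1]
    have hsub : Dmain A (iterD (Dmain A) Set.univ o) ⊆ iterD (Dmain A) Set.univ o := by
      refine subset_trans (inter_subset_right) ?_
      exact (closure_mono inter_subset_left).trans (le_of_eq ih.2.closure_eq)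
    exact ⟨inter_eq_self_of_subset_right hsub, isClosed_closure.inter isClosed_closure⟩
  | limit o ho ih =>
    rw [iterD_limit _ _ ho, iterD_limit _ _ ho]
    exact ⟨iInter_congr fun η => iInter_congr fun hη => (ih η hη).1,
      isClosed_iInter fun η => isClosed_iInter fun hη => (ih η hη).2⟩

theorem rkD_congr {X : Type*} (D D' : Set X → Set X)
    (h : ∀ θ, iterD D Set.univ θ = iterD D' Set.univ θ) : rkD D = rkD D' := by
  have h2 : (∃ θ, iterD D Set.univ θ = ∅) = (∃ θ, iterD D' Set.univ θ = ∅) := by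
    simp_rw [h]
  unfold rkD
  simp_rw [h]
  rw [h2]

theorem rkD_bad_le {X : Type*} (D D' : Set X → Set X) (hD : ∀ F, D F = ∅) :
    rkD D ≤ rkD D' := by
  by_cases hX : (Set.univ : Set X) = ∅
  · have h0 : iterD D Set.univ 0 = ∅ := by rw [iterD_zero]; exact hX
    have : rkD D = 0 := by
      rw [rkD, if_pos ⟨0, h0⟩]
      exact le_antisymm (csInf_le' h0) (zero_le (a := _))
    simp [this]
  · have h1 : iterD D Set.univ 1 = ∅ := by
      rw [show (1 : Ordinal) = Order.succ 0 by simp, iterD_succ, hD]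
    have hle : rkD D ≤ 1 := by rw [rkD, if_pos ⟨1, h1⟩]; exact csInf_le' h1
    have hge : (1 : Ordinal) ≤ rkD D' := by
      rw [rkD]; split_ifs with hex
      · by_contra hlt
        push_neg at hlt
        have h0 : sInf {θ | iterD D' Set.univ θ = ∅} = 0 := Ordinal.lt_one_iff_zero.mp hlt
        have hmem : iterD D' Set.univ (sInf {θ | iterD D' Set.univ θ = ∅}) = ∅ :=
          csInf_mem hex
        rw [h0, iterD_zero] at hmem
        exact hX hmem
      · exact Order.one_le_iff_pos.mpr Cardinal.isRegular_aleph_one.ord_pos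
    exact hle.trans hge

section Indicator

variable {X : Type*} [TopologicalSpace X] (A : Set X)

private theorem ind_cases (x : X) :
    A.indicator (fun _ => (1 : ℝ)) x = 0 ∨ A.indicator (fun _ => (1 : ℝ)) x = 1 := by
  by_cases hx : x ∈ A
  · right; simp [Set.indicator_of_mem hx]
  · left; simp [Set.indicator_of_notMem hx]

theorem osc_ind_le_one (x : X) (F : Set X) :
    osc (A.indicator fun _ => (1 : ℝ)) x F ≤ 1 := by
  set f := A.indicator fun _ => (1 : ℝ) with hf
  have hbd : ∀ y z : X, ENNReal.ofReal |f y - f z| ≤ 1 := by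
    intro y z
    refine ENNReal.ofReal_le_one.mpr ?_
    rcases ind_cases A y with hy | hy <;> rcases ind_cases A z with hz | hz <;>
      rw [← hf] at hy hz <;> rw [hy, hz] <;> norm_num
  refine le_trans (iInf_le _ Set.univ) ?_
  refine le_trans (iInf_le _ isOpen_univ) ?_
  refine le_trans (iInf_le _ (Set.mem_univ x)) ?_
  exact iSup_le fun y => iSup_le fun _ => iSup_le fun z => iSup_le fun _ => hbd y z

theorem oscDeriv_ind_eq {ε : ℝ} (hε0 : 0 < ε) (hε1 : ε ≤ 1) (F : Set X) :
    oscDeriv (A.indicator fun _ => (1 : ℝ)) ε F = F ∩ Dmain A F := by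
  set f := A.indicator fun _ => (1 : ℝ) with hf
  ext x
  simp only [oscDeriv, Set.mem_setOf_eq, Dmain, Set.mem_inter_iff]
  constructor
  · rintro ⟨hxF, hosc⟩
    refine ⟨hxF, ?_, ?_⟩
    · by_contra hc
      rw [mem_closure_iff] at hc
      push_neg at hc
      obtain ⟨U, hU, hxU, hUe⟩ := hc
      have hval : ∀ y ∈ U ∩ F, f y = 1 := by
        intro y ⟨hyU, hyF⟩
        have hyA : y ∈ A := by
          by_contra hyA
          have hne : (U ∩ (F ∩ Aᶜ)).Nonempty := ⟨y, hyU, hyF, hyA⟩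
          rw [hUe] at hne
          exact Set.not_nonempty_empty hne
        simp [hf, Set.indicator_of_mem hyA]
      have hT : (⨆ (y) (_ : y ∈ U ∩ F) (z) (_ : z ∈ U ∩ F),
          ENNReal.ofReal |f y - f z|) ≤ 0 := by
        refine iSup_le fun y => iSup_le fun hy => iSup_le fun z => iSup_le fun hz => ?_
        rw [hval y hy, hval z hz]
        simp
      have hle : osc f x F ≤ 0 := by
        refine le_trans (iInf_le _ U) (le_trans (iInf_le _ hU) (le_trans (iInf_le _ hxU) hT))
      have := le_trans hosc hle
      simpa using lt_irrefl _ (lt_of_lt_of_le (ENNReal.ofReal_pos.mpr hε0) this)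
    · by_contra hc
      rw [mem_closure_iff] at hc
      push_neg at hc
      obtain ⟨U, hU, hxU, hUe⟩ := hc
      have hval : ∀ y ∈ U ∩ F, f y = 0 := by
        intro y ⟨hyU, hyF⟩
        have hyA : y ∉ A := by
          intro hyA
          have hne : (U ∩ (F ∩ A)).Nonempty := ⟨y, hyU, hyF, hyA⟩
          rw [hUe] at hne
          exact Set.not_nonempty_empty hne
        simp [hf, Set.indicator_of_notMem hyA]
      have hT : (⨆ (y) (_ : y ∈ U ∩ F) (z) (_ : z ∈ U ∩ F),
          ENNReal.ofReal |f y - f z|) ≤ 0 := by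
        refine iSup_le fun y => iSup_le fun hy => iSup_le fun z => iSup_le fun hz => ?_
        rw [hval y hy, hval z hz]
        simp
      have hle : osc f x F ≤ 0 := by
        refine le_trans (iInf_le _ U) (le_trans (iInf_le _ hU) (le_trans (iInf_le _ hxU) hT))
      have := le_trans hosc hle
      simpa using lt_irrefl _ (lt_of_lt_of_le (ENNReal.ofReal_pos.mpr hε0) this)
  · rintro ⟨hxF, hc1, hc2⟩
    refine ⟨hxF, ?_⟩
    refine le_iInf fun U => le_iInf fun hU => le_iInf fun hxU => ?_
    obtain ⟨y, hyU, hyF, hyA⟩ := mem_closure_iff.mp hc1 U hU hxU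
    obtain ⟨z, hzU, hzF, hzA⟩ := mem_closure_iff.mp hc2 U hU hxU
    have hfy : f y = 0 := by simp [hf, Set.indicator_of_notMem hyA]
    have hfz : f z = 1 := by simp [hf, Set.indicator_of_mem hzA]
    have h1 : ENNReal.ofReal ε ≤ ENNReal.ofReal |f y - f z| := by
      rw [hfy, hfz]
      exact ENNReal.ofReal_le_ofReal (by simpa using hε1)
    exact le_trans h1 (le_iSup₂_of_le y ⟨hyU, hyF⟩ (le_iSup₂_of_le z ⟨hzU, hzF⟩ le_rfl))

theorem oscDeriv_ind_big {ε : ℝ} (hε : 1 < ε) (F : Set X) :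
    oscDeriv (A.indicator fun _ => (1 : ℝ)) ε F = ∅ := by
  ext x
  simp only [oscDeriv, Set.mem_setOf_eq, Set.mem_empty_iff_false, iff_false, not_and]
  intro _ hosc
  have h1 : (1 : ENNReal) < ENNReal.ofReal ε := by
    rw [show (1 : ENNReal) = ENNReal.ofReal 1 by simp]
    exact ENNReal.ofReal_lt_ofReal_iff (lt_trans one_pos hε) |>.mpr hε
  exact absurd (le_trans hosc (osc_ind_le_one A x F)) (not_le.mpr h1)

theorem setle_good {p : ℚ} (hp : (0 : ℝ) ≤ (p : ℝ)) (hp1 : (p : ℝ) < 1) :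
    {x : X | A.indicator (fun _ => (1 : ℝ)) x ≤ (p : ℝ)} = Aᶜ := by
  ext x
  by_cases hx : x ∈ A
  · simp [Set.indicator_of_mem hx, hx, not_le.mpr hp1]
  · simp [Set.indicator_of_notMem hx, hx, hp]

theorem setge_good {q : ℚ} (hq : (0 : ℝ) < (q : ℝ)) (hq1 : (q : ℝ) ≤ 1) :
    {x : X | (q : ℝ) ≤ A.indicator (fun _ => (1 : ℝ)) x} = A := by
  ext x
  by_cases hx : x ∈ A
  · simp [Set.indicator_of_mem hx, hx, hq1]
  · simp [Set.indicator_of_notMem hx, hx, not_le.mpr hq]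

theorem setle_bad {p : ℚ} (hp : (p : ℝ) < 0) :
    {x : X | A.indicator (fun _ => (1 : ℝ)) x ≤ (p : ℝ)} = ∅ := by
  ext x
  simp only [Set.mem_setOf_eq, Set.mem_empty_iff_false, iff_false, not_le]
  refine lt_of_lt_of_le hp ?_
  exact Set.indicator_nonneg (fun _ _ => zero_le_one) x

theorem setge_bad {q : ℚ} (hq : (1 : ℝ) < (q : ℝ)) :
    {x : X | (q : ℝ) ≤ A.indicator (fun _ => (1 : ℝ)) x} = ∅ := by
  ext x
  simp only [Set.mem_setOf_eq, Set.mem_empty_iff_false, iff_false, not_le]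
  refine lt_of_le_of_lt ?_ hq
  rcases ind_cases A x with h | h <;> rw [h] <;> norm_num

theorem rkD_oscDeriv_eq {ε : ℝ} (hε0 : 0 < ε) (hε1 : ε ≤ 1) :
    rkD (oscDeriv (A.indicator fun _ => (1 : ℝ)) ε) = rkD (Dmain A) := by
  have hfun : oscDeriv (A.indicator fun _ => (1 : ℝ)) ε = fun F => F ∩ Dmain A F :=
    funext fun F => oscDeriv_ind_eq A hε0 hε1 F
  rw [hfun]
  exact rkD_congr _ _ fun θ => (iter_main A θ).1

end Indicator

end AuxLemmas

/-- The separation rank `α`. -/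
def alphaRank {X : Type*} [TopologicalSpace X] (f : X → ℝ) : Ordinal.{0} :=
  ⨆ pq : {pq : ℚ × ℚ // pq.1 < pq.2},
    rkD (fun F => closure (F ∩ {x | f x ≤ (pq.1.1 : ℝ)}) ∩
      closure (F ∩ {x | (pq.1.2 : ℝ) ≤ f x}))

set_option maxHeartbeats 1000000 in
theorem stmt7 {X : Type*} [TopologicalSpace X] [PolishSpace X] (A : Set X)
    (h : BaireClass 1 (A.indicator fun _ => (1 : ℝ))) :
    alphaRank (A.indicator fun _ => (1 : ℝ)) =
      betaRank (A.indicator fun _ => (1 : ℝ)) := by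
  clear h
  have halpha : alphaRank (A.indicator fun _ => (1 : ℝ)) = rkD (Dmain A) := by
    have key : ∀ pq : {pq : ℚ × ℚ // pq.1 < pq.2},
        rkD (fun F => closure (F ∩ {x | A.indicator (fun _ => (1 : ℝ)) x ≤ (pq.1.1 : ℝ)}) ∩
          closure (F ∩ {x | (pq.1.2 : ℝ) ≤ A.indicator (fun _ => (1 : ℝ)) x})) ≤
            rkD (Dmain A) ∧
        ((0 : ℝ) ≤ (pq.1.1 : ℝ) → ((pq.1.2 : ℝ) ≤ 1) →
          rkD (fun F => closure (F ∩ {x | A.indicator (fun _ => (1 : ℝ)) x ≤ (pq.1.1 : ℝ)}) ∩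
            closure (F ∩ {x | (pq.1.2 : ℝ) ≤ A.indicator (fun _ => (1 : ℝ)) x})) =
              rkD (Dmain A)) := by
      rintro ⟨⟨p, q⟩, hpq⟩
      have hpqR : (p : ℝ) < (q : ℝ) := by exact_mod_cast hpq
      have main : (0 : ℝ) ≤ (p : ℝ) → ((q : ℝ) ≤ 1) →
          rkD (fun F => closure (F ∩ {x | A.indicator (fun _ => (1 : ℝ)) x ≤ (p : ℝ)}) ∩
            closure (F ∩ {x | (q : ℝ) ≤ A.indicator (fun _ => (1 : ℝ)) x})) =
              rkD (Dmain A) := by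
        intro hp hq
        have h1 : {x : X | A.indicator (fun _ => (1 : ℝ)) x ≤ (p : ℝ)} = Aᶜ :=
          setle_good A hp (lt_of_lt_of_le hpqR hq)
        have h2 : {x : X | (q : ℝ) ≤ A.indicator (fun _ => (1 : ℝ)) x} = A :=
          setge_good A (lt_of_le_of_lt hp hpqR) hq
        have hfun : (fun F : Set X =>
            closure (F ∩ {x | A.indicator (fun _ => (1 : ℝ)) x ≤ (p : ℝ)}) ∩
            closure (F ∩ {x | (q : ℝ) ≤ A.indicator (fun _ => (1 : ℝ)) x})) = Dmain A := by
          funext F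
          rw [h1, h2]
          rfl
        rw [hfun]
      constructor
      · by_cases hp : (p : ℝ) < 0
        · refine rkD_bad_le _ _ fun F => ?_
          simp [setle_bad A hp]
        · by_cases hq : (1 : ℝ) < (q : ℝ)
          · refine rkD_bad_le _ _ fun F => ?_
            simp [setge_bad A hq]
          · exact le_of_eq (main (not_lt.mp hp) (not_lt.mp hq))
      · exact main
    have hidx : (((0 : ℚ), (1 : ℚ)) : ℚ × ℚ).1 < (((0 : ℚ), (1 : ℚ)) : ℚ × ℚ).2 := by
      norm_num
    haveI : Nonempty {pq : ℚ × ℚ // pq.1 < pq.2} := ⟨⟨((0 : ℚ), (1 : ℚ)), hidx⟩⟩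
    unfold alphaRank
    refine le_antisymm (ciSup_le fun pq => (key pq).1) ?_
    have h01 := (key ⟨((0 : ℚ), (1 : ℚ)), hidx⟩).2 (by norm_num) (by norm_num)
    exact (le_of_eq h01.symm).trans (Ordinal.le_iSup
      (fun pq : {pq : ℚ × ℚ // pq.1 < pq.2} =>
        rkD (fun F : Set X =>
          closure (F ∩ {x | A.indicator (fun _ => (1 : ℝ)) x ≤ (pq.1.1 : ℝ)}) ∩
          closure (F ∩ {x | (pq.1.2 : ℝ) ≤ A.indicator (fun _ => (1 : ℝ)) x})))
      ⟨((0 : ℚ), (1 : ℚ)), hidx⟩)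
  have hbeta : betaRank (A.indicator fun _ => (1 : ℝ)) = rkD (Dmain A) := by
    haveI : Nonempty {ε : ℝ // 0 < ε} := ⟨⟨1, one_pos⟩⟩
    unfold betaRank
    refine le_antisymm (ciSup_le fun ε => ?_) ?_
    · by_cases hε1 : ε.1 ≤ 1
      · exact le_of_eq (rkD_oscDeriv_eq A ε.2 hε1)
      · exact rkD_bad_le _ _ fun F => oscDeriv_ind_big A (not_le.mp hε1) F
    · exact (le_of_eq (rkD_oscDeriv_eq A one_pos le_rfl).symm).trans (Ordinal.le_iSup
        (fun ε : {ε : ℝ // 0 < ε} => rkD (oscDeriv (A.indicator fun _ => (1 : ℝ)) ε.1))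
        (⟨1, one_pos⟩ : {ε : ℝ // 0 < ε}))
  rw [halpha, hbeta]

end
end

section
/- Let (f_η)_{η<λ} be a decreasing transfinite sequence of non-negative bounded functions. Then for all even ordinals θ₁ ≤ θ₂ ≤ λ, the partial alternating sums satisfy Σ*_{η<θ₁} (−1)^η f_η ≤ Σ*_{η<θ₂} (−1)^η f_η pointwise. -/
open Set Filter Topology

noncomputable section

lemma altSum_zero' {X : Type*} (f : Ordinal.{0} → X → ℝ) : altSum f 0 = fun _ => 0 :=
  Ordinal.limitRecOn_zero _ _ _

lemma altSum_succ' {X : Type*} (f : Ordinal.{0} → X → ℝ) (η : Ordinal.{0}) :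
    altSum f (η + 1) = fun x =>
      altSum f η x + (if η % 2 = 0 then f η x else - f η x) := by
  rw [altSum, Ordinal.add_one_eq_succ, Ordinal.limitRecOn_succ]
  rfl

lemma altSum_limit' {X : Type*} (f : Ordinal.{0} → X → ℝ) (θ : Ordinal.{0})
    (h : Order.IsSuccLimit θ) :
    altSum f θ = fun x =>
      sSup {y | ∃ ζ, ∃ _ : ζ < θ, ζ % 2 = 0 ∧ altSum f ζ x = y} := by
  rw [altSum, Ordinal.limitRecOn_limit _ _ _ _ h]
  rfl

lemma mod2_cases (o : Ordinal.{0}) : o % 2 = 0 ∨ o % 2 = 1 := by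
  have h : o % 2 < 2 := Ordinal.mod_lt o two_ne_zero
  have h' : o % 2 ≤ 1 := by
    rwa [← Order.lt_succ_iff, ← Ordinal.add_one_eq_succ, one_add_one_eq_two]
  exact Ordinal.le_one_iff.1 h'

lemma mod2_succ (o : Ordinal.{0}) :
    (o + 1) % 2 = if o % 2 = 0 then 1 else 0 := by
  have key : 2 * (o / 2) + o % 2 = o := Ordinal.div_add_mod o 2
  rcases mod2_cases o with h | h
  · rw [h, add_zero] at key
    rw [h, if_pos rfl]
    conv_lhs => rw [← key]
    rw [Ordinal.mul_add_mod_self]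
    exact Ordinal.mod_eq_of_lt one_lt_two
  · rw [h] at key
    rw [h, if_neg one_ne_zero, ← key, add_assoc]
    have : (1 : Ordinal.{0}) + 1 = 2 := one_add_one_eq_two
    rw [this, ← mul_add_one, Ordinal.mul_mod]

lemma limit_even (o : Ordinal.{0}) (h : Order.IsSuccLimit o) : o % 2 = 0 := by
  rcases mod2_cases o with h0 | h1
  · exact h0
  · exfalso
    have key : 2 * (o / 2) + o % 2 = o := Ordinal.div_add_mod o 2
    rw [h1] at key
    have : 2 * (o / 2) < o := by
      conv_rhs => rw [← key]
      rw [Ordinal.add_one_eq_succ]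
      exact Order.lt_succ _
    have := h.succ_lt this
    rw [Ordinal.add_one_eq_succ] at key
    rw [key] at this
    exact lt_irrefl _ this

lemma altSum_key {X : Type*} (lam : Ordinal.{0}) (f : Ordinal.{0} → X → ℝ)
    (hmono : ∀ η ζ : Ordinal.{0}, η ≤ ζ → ζ ≤ lam → ∀ x, f ζ x ≤ f η x)
    (hnn : ∀ η : Ordinal.{0}, η ≤ lam → ∀ x, 0 ≤ f η x) :
    ∀ θ : Ordinal.{0}, θ % 2 = 0 → θ ≤ lam →
      ∀ ζ : Ordinal.{0}, ζ % 2 = 0 → ζ ≤ θ → ∀ x,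
        altSum f ζ x ≤ altSum f θ x ∧
        altSum f θ x + f θ x ≤ altSum f ζ x + f ζ x := by
  intro θ
  induction θ using Ordinal.induction with
  | h θ IH =>
    intro hθeven hθlam ζ hζeven hζθ x
    rcases eq_or_lt_of_le hζθ with rfl | hζlt
    · exact ⟨le_rfl, le_rfl⟩
    rcases Ordinal.zero_or_succ_or_isSuccLimit θ with rfl | ⟨η, rfl⟩ | hlim
    · exact absurd hζlt (not_lt_zero (a := ζ))
    · -- successor case: θ = η + 1, even, so η odd, η = μ + 1 with μ even
      rw [← Ordinal.add_one_eq_succ] at *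
      have hηodd : η % 2 = 1 := by
        rcases mod2_cases η with h0 | h1
        · rw [mod2_succ, if_pos h0] at hθeven; exact absurd hθeven one_ne_zero
        · exact h1
      have hηne0 : η ≠ 0 := by
        intro h; rw [h] at hηodd; simp [Ordinal.zero_mod] at hηodd
      rcases Ordinal.zero_or_succ_or_isSuccLimit η with h0 | ⟨μ, rfl⟩ | hlim
      · exact absurd h0 hηne0
      · rw [← Ordinal.add_one_eq_succ] at *
        have hμeven : μ % 2 = 0 := by
          rcases mod2_cases μ with h0 | h1
          · exact h0
          · rw [mod2_succ, if_neg (by rw [h1]; exact one_ne_zero)] at hηodd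
            exact absurd hηodd.symm one_ne_zero
        have hμlam : μ ≤ lam := le_trans (le_of_lt (by
          calc μ < μ + 1 := lt_add_one μ
            _ < μ + 1 + 1 := lt_add_one _)) hθlam
        have hμ1lam : μ + 1 ≤ lam := le_trans (le_of_lt (lt_add_one _)) hθlam
        have hζμ : ζ ≤ μ := by
          have h1 : ζ < μ + 1 + 1 := hζlt
          rw [Ordinal.add_one_eq_succ (μ+1), Order.lt_succ_iff] at h1
          rcases eq_or_lt_of_le h1 with rfl | h2
          · rw [mod2_succ, if_pos hμeven] at hζeven
            exact absurd hζeven one_ne_zero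
          · rw [Ordinal.add_one_eq_succ, Order.lt_succ_iff] at h2
            exact h2
        have hμlt : μ < μ + 1 + 1 := by
          calc μ < μ + 1 := lt_add_one μ
            _ < μ + 1 + 1 := lt_add_one _
        obtain ⟨ih1, ih2⟩ := IH μ hμlt hμeven hμlam ζ hζeven hζμ x
        have e1 : altSum f (μ + 1 + 1) x
            = altSum f μ x + f μ x - f (μ + 1) x := by
          rw [altSum_succ']
          simp only [mod2_succ, if_pos hμeven, if_neg one_ne_zero]
          rw [altSum_succ']
          simp only [if_pos hμeven]
          ring
        have hf1 : f (μ + 1) x ≤ f μ x :=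
          hmono μ (μ + 1) (le_of_lt (lt_add_one μ)) hμ1lam x
        have hf2 : f (μ + 1 + 1) x ≤ f (μ + 1) x :=
          hmono (μ + 1) (μ + 1 + 1) (le_of_lt (lt_add_one _)) hθlam x
        constructor
        · rw [e1]; linarith
        · rw [e1]; linarith
      · rw [limit_even η hlim] at hηodd
        exact absurd hηodd zero_ne_one
    · -- limit case
      have e1 := altSum_limit' f θ hlim
      have hSθ : altSum f θ x
          = sSup {y | ∃ ξ, ∃ _ : ξ < θ, ξ % 2 = 0 ∧ altSum f ξ x = y} := by
        rw [e1]
      set s := {y | ∃ ξ, ∃ _ : ξ < θ, ξ % 2 = 0 ∧ altSum f ξ x = y} with hs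
      have hbdd : BddAbove s := by
        refine ⟨f 0 x, ?_⟩
        rintro y ⟨ξ, hξθ, hξeven, rfl⟩
        have hξlam : ξ ≤ lam := le_trans (le_of_lt hξθ) hθlam
        obtain ⟨_, ih2⟩ := IH ξ hξθ hξeven hξlam 0 (Ordinal.zero_mod 2)
          (zero_le (a := ξ)) x
        rw [altSum_zero'] at ih2
        simp only [zero_add] at ih2
        have := hnn ξ hξlam x
        linarith
      have hmem : altSum f ζ x ∈ s := ⟨ζ, hζlt, hζeven, rfl⟩
      constructor
      · rw [hSθ]; exact le_csSup hbdd hmem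
      · rw [hSθ]
        have hle : sSup s ≤ altSum f ζ x + f ζ x - f θ x := by
          apply csSup_le ⟨_, hmem⟩
          rintro y ⟨ξ, hξθ, hξeven, rfl⟩
          have hξlam : ξ ≤ lam := le_trans (le_of_lt hξθ) hθlam
          have hζlam : ζ ≤ lam := le_trans (le_of_lt hζlt) hθlam
          rcases le_total ζ ξ with hcmp | hcmp
          · obtain ⟨_, ih2⟩ := IH ξ hξθ hξeven hξlam ζ hζeven hcmp x
            have hf : f θ x ≤ f ξ x := hmono ξ θ (le_of_lt hξθ) hθlam x
            linarith
          · obtain ⟨ih1, _⟩ := IH ζ hζlt hζeven hζlam ξ hξeven hcmp x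
            have hf : f θ x ≤ f ζ x := hmono ζ θ (le_of_lt hζlt) hθlam x
            linarith
        linarith

theorem stmt8 {X : Type*} (lam : Ordinal.{0}) (f : Ordinal.{0} → X → ℝ)
    (hmono : ∀ η ζ : Ordinal.{0}, η ≤ ζ → ζ ≤ lam → ∀ x, f ζ x ≤ f η x)
    (hnn : ∀ η : Ordinal.{0}, η ≤ lam → ∀ x, 0 ≤ f η x)
    (hbd : ∀ η : Ordinal.{0}, η ≤ lam → ∃ M, ∀ x, |f η x| ≤ M)
    (θ₁ θ₂ : Ordinal.{0}) (h1 : θ₁ % 2 = 0) (h2 : θ₂ % 2 = 0)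
    (h12 : θ₁ ≤ θ₂) (h2l : θ₂ ≤ lam) (x : X) :
    altSum f θ₁ x ≤ altSum f θ₂ x :=
  (altSum_key lam f hmono hnn θ₂ h2 h2l θ₁ h1 h12 x).1

end
end

section
/- Let (F_η)_{η<ω^{λ+1}} be a decreasing continuous transfinite sequence of closed subsets of a Polish space with F₀ = X and ⋂_η F_η = ∅, let A = ⋃_{η even} (F_η \ F_{η+1}), let (λ_k) be an increasing sequence of positive even ordinals with λ_k → ω^λ, and let B_k = ⋃_{n∈ℕ} ⋃_{ω^λ·n ≤ η < ω^λ·n + λ_k, η even} (F_η \ F_{η+1}). Then χ_{B_k} → χ_A pointwise. -/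
open Set Filter Topology

noncomputable section

theorem stmt18 {X : Type*} [TopologicalSpace X] [PolishSpace X]
    (lam : Ordinal.{0}) (hlamc : lam.card ≤ Cardinal.aleph0)
    (F : Ordinal.{0} → Set X)
    (hcl : ∀ η : Ordinal.{0}, η < Ordinal.omega0 ^ (lam + 1) → IsClosed (F η))
    (hdec : ∀ η ζ : Ordinal.{0}, η ≤ ζ → ζ < Ordinal.omega0 ^ (lam + 1) → F ζ ⊆ F η)
    (hcont : ∀ θ : Ordinal.{0}, θ < Ordinal.omega0 ^ (lam + 1) → Order.IsSuccLimit θ →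
      F θ = ⋂ (η : Ordinal.{0}) (_ : η < θ), F η)
    (hF0 : F 0 = Set.univ)
    (hint : ⋂ (η : Ordinal.{0}) (_ : η < Ordinal.omega0 ^ (lam + 1)), F η = ∅)
    (A : Set X)
    (hA : A = ⋃ (η : Ordinal.{0}) (_ : η < Ordinal.omega0 ^ (lam + 1))
      (_ : η % 2 = 0), F η \ F (η + 1))
    (lamk : ℕ → Ordinal.{0}) (hlk : StrictMono lamk)
    (hlk0 : ∀ k, 0 < lamk k) (hlke : ∀ k, lamk k % 2 = 0)
    (hlklt : ∀ k, lamk k < Ordinal.omega0 ^ lam)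
    (hlkto : ∀ η : Ordinal.{0}, η < Ordinal.omega0 ^ lam → ∃ k, η < lamk k)
    (B : ℕ → Set X)
    (hB : ∀ k, B k = ⋃ (n : ℕ), ⋃ (η : Ordinal.{0})
      (_ : Ordinal.omega0 ^ lam * (n : Ordinal.{0}) ≤ η)
      (_ : η < Ordinal.omega0 ^ lam * (n : Ordinal.{0}) + lamk k)
      (_ : η % 2 = 0), F η \ F (η + 1)) :
    ∀ x, Tendsto (fun k => Set.indicator (B k) (fun _ => (1 : ℝ)) x) atTop
      (𝓝 (Set.indicator A (fun _ => (1 : ℝ)) x)) := by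
  have hBsubA : ∀ k, B k ⊆ A := by
    intro k x hx
    rw [hB k] at hx
    simp only [Set.mem_iUnion] at hx
    obtain ⟨n, η, hge, hlt, heven, hxF⟩ := hx
    rw [hA]
    simp only [Set.mem_iUnion]
    refine ⟨η, ?_, heven, hxF⟩
    have h1 : η < Ordinal.omega0 ^ lam * (n : Ordinal.{0}) + Ordinal.omega0 ^ lam :=
      hlt.trans_le (add_le_add_right (hlklt k).le _)
    have h2 : Ordinal.omega0 ^ lam * (n : Ordinal.{0}) + Ordinal.omega0 ^ lam
        = Ordinal.omega0 ^ lam * ((n : Ordinal.{0}) + 1) := by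
      rw [mul_add, mul_one]
    have h3 : Ordinal.omega0 ^ lam * ((n : Ordinal.{0}) + 1)
        ≤ Ordinal.omega0 ^ (lam + 1) := by
      rw [Ordinal.opow_add, Ordinal.opow_one]
      have : ((n : Ordinal.{0}) + 1) = ((n + 1 : ℕ) : Ordinal.{0}) := by push_cast; ring
      rw [this]
      exact mul_le_mul_right (Ordinal.nat_lt_omega0 (n + 1)).le _
    calc η < _ := h1
      _ = _ := h2
      _ ≤ _ := h3
  intro x
  by_cases hxA : x ∈ A
  · -- eventually x ∈ B k
    have hx := hxA
    rw [hA] at hx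
    simp only [Set.mem_iUnion] at hx
    obtain ⟨η, hηlt, heven, hxF⟩ := hx
    have hwpos : (Ordinal.omega0 ^ lam : Ordinal.{0}) ≠ 0 :=
      (Ordinal.opow_pos lam Ordinal.omega0_pos).ne'
    have hdiv : Ordinal.omega0 ^ lam * (η / Ordinal.omega0 ^ lam)
        + η % Ordinal.omega0 ^ lam = η := Ordinal.div_add_mod η _
    have hmodlt : η % Ordinal.omega0 ^ lam < Ordinal.omega0 ^ lam :=
      Ordinal.mod_lt η hwpos
    have hdivlt : η / Ordinal.omega0 ^ lam < Ordinal.omega0 := by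
      rw [Ordinal.div_lt hwpos, ← Ordinal.opow_succ]
      exact hηlt
    obtain ⟨n, hn⟩ := Ordinal.lt_omega0.mp hdivlt
    obtain ⟨k₀, hk₀⟩ := hlkto (η % Ordinal.omega0 ^ lam) hmodlt
    have hmem : ∀ k, k₀ ≤ k → x ∈ B k := by
      intro k hk
      rw [hB k]
      simp only [Set.mem_iUnion]
      refine ⟨n, η, ?_, ?_, heven, hxF⟩
      · rw [← hdiv, hn]
        exact le_self_add
      · rw [← hdiv, hn]
        apply add_lt_add_right
        exact hk₀.trans_le (hlk.monotone hk)
    have heq : Set.indicator A (fun _ => (1 : ℝ)) x = 1 := Set.indicator_of_mem hxA _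
    rw [heq]
    apply Tendsto.congr' _ tendsto_const_nhds
    filter_upwards [eventually_ge_atTop k₀] with k hk
    exact (Set.indicator_of_mem (hmem k hk) (fun _ => (1:ℝ))).symm
  · have heq : Set.indicator A (fun _ => (1 : ℝ)) x = 0 := Set.indicator_of_notMem hxA _
    rw [heq]
    apply Tendsto.congr' _ tendsto_const_nhds
    filter_upwards with k
    exact (Set.indicator_of_notMem (fun h => hxA (hBsubA k h)) (fun _ => (1:ℝ))).symm


end
end
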